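/- Assume the a-posteriori set G_y is nonempty and let {x̃_k}_{k=0}^{N+1} ∈ G_y. Then sup_{{x_k}∈G_y} |ℓ({x_k}) − ℓ({x̃_k})| < +∞ if and only if the family {ℓ_k}_{k=0}^{N+1} belongs to L. -/

import Mathlib

open Matrix



/-- Factor a functional through a linear map whose kernel it kills. -/
lemma factor_through {X Y : Type*} [AddCommGroup X] [Module ℝ X] [AddCommGroup Y] [Module ℝ Y]
    (T : X →ₗ[ℝ] Y) (g : X →ₗ[ℝ] ℝ) (h : ∀ x, T x = 0 → g x = 0) :
    ∃ ψ : Y →ₗ[ℝ] ℝ, ∀ x, ψ (T x) = g x := by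
  have hker : LinearMap.ker T ≤ LinearMap.ker g := fun x hx => h x hx
  let e := T.quotKerEquivRange
  let g' : (X ⧸ LinearMap.ker T) →ₗ[ℝ] ℝ := (LinearMap.ker T).liftQ g hker
  let f : (LinearMap.range T) →ₗ[ℝ] ℝ := g' ∘ₗ (e.symm : LinearMap.range T →ₗ[ℝ] X ⧸ LinearMap.ker T)
  obtain ⟨ψ, hψ⟩ := f.exists_extend
  refine ⟨ψ, fun x => ?_⟩
  have hx : T x = (LinearMap.range T).subtype ⟨T x, LinearMap.mem_range_self T x⟩ := rfl
  rw [hx, ← LinearMap.comp_apply, hψ]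
  have he : e (Submodule.Quotient.mk x) = ⟨T x, LinearMap.mem_range_self T x⟩ :=
    Subtype.ext (T.quotKerEquivRange_apply_mk x)
  have : e.symm ⟨T x, LinearMap.mem_range_self T x⟩ = Submodule.Quotient.mk x := by
    rw [← he, LinearEquiv.symm_apply_apply]
  show g' (e.symm ⟨T x, LinearMap.mem_range_self T x⟩) = g x
  rw [this, Submodule.liftQ_apply]

/-- dot-product extensionality -/
lemma dot_ext {d : ℕ} {a b : Fin d → ℝ} (h : ∀ v, a ⬝ᵥ v = b ⬝ᵥ v) : a = b := by
  funext i
  have := h (Pi.single i 1)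
  simpa [dotProduct_single] using this

/-- Cauchy–Schwarz style bound for a positive definite matrix. -/
lemma cs_bound {d : ℕ} {Q : Matrix (Fin d) (Fin d) ℝ} (hQ : Q.PosDef)
    (w v : Fin d → ℝ) (hv : (Q *ᵥ v) ⬝ᵥ v ≤ 1) :
    |w ⬝ᵥ v| ≤ Real.sqrt (w ⬝ᵥ (Q⁻¹ *ᵥ w)) := by
  set a : Fin d → ℝ := Q⁻¹ *ᵥ w with ha
  have hinv : Q *ᵥ a = w := by
    rw [ha, mulVec_mulVec, Matrix.mul_nonsing_inv _ hQ.det_pos.ne'.isUnit, one_mulVec]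
  -- symmetry
  have hsym : Qᵀ = Q := hQ.isHermitian.eq
  have hdot : ∀ u₁ u₂ : Fin d → ℝ, (Q *ᵥ u₁) ⬝ᵥ u₂ = (Q *ᵥ u₂) ⬝ᵥ u₁ := by
    intro u₁ u₂
    rw [dotProduct_comm, dotProduct_mulVec, ← mulVec_transpose, hsym]
  have hquad : ∀ t : ℝ, 0 ≤ ((Q *ᵥ a) ⬝ᵥ a) * (t * t) + (2 * ((Q *ᵥ a) ⬝ᵥ v)) * t + (Q *ᵥ v) ⬝ᵥ v := by
    intro t
    have h0 : 0 ≤ (Q *ᵥ (v + t • a)) ⬝ᵥ (v + t • a) := by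
      have := hQ.posSemidef.dotProduct_mulVec_nonneg (v + t • a)
      rw [dotProduct_comm]
      exact this
    have hexp : (Q *ᵥ (v + t • a)) ⬝ᵥ (v + t • a)
        = ((Q *ᵥ a) ⬝ᵥ a) * (t * t) + (2 * ((Q *ᵥ a) ⬝ᵥ v)) * t + (Q *ᵥ v) ⬝ᵥ v := by
      have h12 : (Q *ᵥ v) ⬝ᵥ a = (Q *ᵥ a) ⬝ᵥ v := hdot v a
      simp only [mulVec_add, mulVec_smul, add_dotProduct, smul_dotProduct, dotProduct_add,
        dotProduct_smul, smul_eq_mul, h12]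
      ring
    linarith [hexp ▸ h0]
  have hd := discrim_le_zero hquad
  rw [discrim] at hd
  have hb2 : ((Q *ᵥ a) ⬝ᵥ v) ^ 2 ≤ ((Q *ᵥ a) ⬝ᵥ a) * ((Q *ᵥ v) ⬝ᵥ v) := by nlinarith
  have haa : 0 ≤ (Q *ᵥ a) ⬝ᵥ a := by
    have := hQ.posSemidef.dotProduct_mulVec_nonneg a; rw [dotProduct_comm]; exact this
  have hwv : (w ⬝ᵥ v) ^ 2 ≤ (Q *ᵥ a) ⬝ᵥ a := by
    calc (w ⬝ᵥ v) ^ 2 = ((Q *ᵥ a) ⬝ᵥ v) ^ 2 := by rw [hinv]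
    _ ≤ ((Q *ᵥ a) ⬝ᵥ a) * ((Q *ᵥ v) ⬝ᵥ v) := hb2
    _ ≤ ((Q *ᵥ a) ⬝ᵥ a) * 1 := by
        apply mul_le_mul_of_nonneg_left hv haa
    _ = (Q *ᵥ a) ⬝ᵥ a := mul_one _
  have hQa : (Q *ᵥ a) ⬝ᵥ a = w ⬝ᵥ (Q⁻¹ *ᵥ w) := by rw [hinv]
  calc |w ⬝ᵥ v| = Real.sqrt ((w ⬝ᵥ v) ^ 2) := (Real.sqrt_sq_eq_abs _).symm
  _ ≤ Real.sqrt ((Q *ᵥ a) ⬝ᵥ a) := Real.sqrt_le_sqrt hwv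
  _ = Real.sqrt (w ⬝ᵥ (Q⁻¹ *ᵥ w)) := by rw [hQa]



lemma rep1 {β : Type*} [Fintype β] [DecidableEq β]
    (φ : (β → ℝ) →ₗ[ℝ] ℝ) (a : β → ℝ) :
    φ a = ∑ i, a i * φ (Pi.single i 1) := by
  rw [LinearMap.pi_apply_eq_sum_univ φ a]
  refine Finset.sum_congr rfl fun i _ => ?_
  have h : (fun j => if i = j then (1 : ℝ) else 0) = Pi.single i 1 := by
    funext j; simp [Pi.single_apply, eq_comm]
  rw [h, smul_eq_mul]

lemma rep2 {α β : Type*} [Fintype α] [DecidableEq α] [Fintype β] [DecidableEq β]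
    (φ : (α → β → ℝ) →ₗ[ℝ] ℝ) (b : α → β → ℝ) :
    φ b = ∑ k, ∑ i, b k i * φ (Pi.single k (Pi.single i 1)) := by
  have hb : φ b = ∑ k, φ (Pi.single k (b k)) := by
    conv_lhs => rw [← Finset.univ_sum_single b]
    rw [map_sum]
  rw [hb]
  refine Finset.sum_congr rfl fun k _ => ?_
  have h1 : φ (Pi.single k (b k)) = (φ ∘ₗ LinearMap.single ℝ (fun _ : α => β → ℝ) k) (b k) := rfl
  rw [h1, rep1]
  refine Finset.sum_congr rfl fun i _ => ?_
  rw [LinearMap.comp_apply]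
  congr 1
-- retry tail





/-!  Index conventions.  The state sequence `x_0,…,x_{N+1}` is a function
`Fin (N+2) → Fin n → ℝ`.  The disturbance sequence `f_{-1},…,f_N` and the
data `B_{-1},…,B_N`, `Q_{-1},…,Q_N` are shifted by one, so `f j`, `B j`,
`Q j` (for `j : Fin (N+2)`) stand for `f_{j-1}`, `B_{j-1}`, `Q_{j-1}`. -/

/-- The constraint set `𝒩` of pairs `({x_k}_{0}^{N+1}, {f_k}_{-1}^{N})` with
`F_{k+1} x_{k+1} - C_k x_k = B_k f_k` (k = 0,…,N) and `F_0 x_0 = B_{-1} f_{-1}`. -/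
def NSet {N m n p : ℕ} (F : Fin (N + 2) → Matrix (Fin m) (Fin n) ℝ)
    (C : Fin (N + 1) → Matrix (Fin m) (Fin n) ℝ)
    (B : Fin (N + 2) → Matrix (Fin m) (Fin p) ℝ) :
    Set ((Fin (N + 2) → Fin n → ℝ) × (Fin (N + 2) → Fin p → ℝ)) :=
  {xf | (∀ k : Fin (N + 1),
      F k.succ *ᵥ xf.1 k.succ - C k *ᵥ xf.1 k.castSucc = B k.succ *ᵥ xf.2 k.succ) ∧
    F 0 *ᵥ xf.1 0 = B 0 *ᵥ xf.2 0}

/-- The functional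
`J_y({f},{x}) = Σ_{k=-1}^{N} (Q_k f_k, f_k) + Σ_{k=0}^{N} (R_k(y_k - H_k x_k), y_k - H_k x_k)`. -/
def Jfun {N n p q : ℕ} (H : Fin (N + 1) → Matrix (Fin q) (Fin n) ℝ)
    (Q : Fin (N + 2) → Matrix (Fin p) (Fin p) ℝ)
    (R : Fin (N + 1) → Matrix (Fin q) (Fin q) ℝ)
    (y : Fin (N + 1) → Fin q → ℝ)
    (f : Fin (N + 2) → Fin p → ℝ) (x : Fin (N + 2) → Fin n → ℝ) : ℝ :=
  (∑ j : Fin (N + 2), (Q j *ᵥ f j) ⬝ᵥ f j) +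
    ∑ k : Fin (N + 1),
      (R k *ᵥ (y k - H k *ᵥ x k.castSucc)) ⬝ᵥ (y k - H k *ᵥ x k.castSucc)

/-- The a-posteriori set `G_y`. -/
def GSet {N m n p q : ℕ} (F : Fin (N + 2) → Matrix (Fin m) (Fin n) ℝ)
    (C : Fin (N + 1) → Matrix (Fin m) (Fin n) ℝ)
    (H : Fin (N + 1) → Matrix (Fin q) (Fin n) ℝ)
    (B : Fin (N + 2) → Matrix (Fin m) (Fin p) ℝ)
    (Q : Fin (N + 2) → Matrix (Fin p) (Fin p) ℝ)
    (R : Fin (N + 1) → Matrix (Fin q) (Fin q) ℝ)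
    (y : Fin (N + 1) → Fin q → ℝ) : Set (Fin (N + 2) → Fin n → ℝ) :=
  {x | ∃ f, (x, f) ∈ NSet F C B ∧ Jfun H Q R y f x ≤ 1}

/-- `ℓ({x_k}) = Σ_{k=0}^{N+1} (ℓ_k, x_k)`. -/
def lfun {N n : ℕ} (l : Fin (N + 2) → Fin n → ℝ) (x : Fin (N + 2) → Fin n → ℝ) : ℝ :=
  ∑ k : Fin (N + 2), l k ⬝ᵥ x k

/-- Membership of the family `{ℓ_k}_{0}^{N+1}` in the set `L`: there are
`z_k ∈ ℝ^m` and `u_k ∈ ℝ^q` with `ℓ_k = F_k' z_k - C_k' z_{k+1} + H_k' u_k`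
(k = 0,…,N) and `F_{N+1}' z_{N+1} = ℓ_{N+1}`. -/
def memL {N m n q : ℕ} (F : Fin (N + 2) → Matrix (Fin m) (Fin n) ℝ)
    (C : Fin (N + 1) → Matrix (Fin m) (Fin n) ℝ)
    (H : Fin (N + 1) → Matrix (Fin q) (Fin n) ℝ)
    (l : Fin (N + 2) → Fin n → ℝ) : Prop :=
  ∃ (z : Fin (N + 2) → Fin m → ℝ) (u : Fin (N + 1) → Fin q → ℝ),
    (∀ k : Fin (N + 1),
      l k.castSucc =
        (F k.castSucc)ᵀ *ᵥ z k.castSucc - (C k)ᵀ *ᵥ z k.succ + (H k)ᵀ *ᵥ u k) ∧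
    (F (Fin.last (N + 1)))ᵀ *ᵥ z (Fin.last (N + 1)) = l (Fin.last (N + 1))

/-- `lhat` is a minimax a-posteriori estimation of the linear function `lf` over `G`:
`sup_{x ∈ G} |lf x - lhat| = inf_{x̃ ∈ G} sup_{x ∈ G} |lf x - lf x̃|`
(suprema and infima taken in the extended reals). -/
def IsMinimaxEstimate {N n : ℕ} (G : Set (Fin (N + 2) → Fin n → ℝ))
    (lf : (Fin (N + 2) → Fin n → ℝ) → ℝ) (lhat : ℝ) : Prop :=
  (⨆ x ∈ G, (↑|lf x - lhat| : EReal)) =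
    ⨅ xt ∈ G, ⨆ x ∈ G, (↑|lf x - lf xt| : EReal)

/-- Lemma 1: for `{x̃_k} ∈ G_y ≠ ∅`,
`sup_{{x_k} ∈ G_y} |ℓ({x_k}) - ℓ({x̃_k})| < +∞ ↔ {ℓ_k} ∈ L`. -/
lemma tdot {a b : ℕ} (A : Matrix (Fin a) (Fin b) ℝ) (w : Fin a → ℝ) (v : Fin b → ℝ) :
    (Aᵀ *ᵥ w) ⬝ᵥ v = (A *ᵥ v) ⬝ᵥ w := by
  rw [mulVec_transpose, ← dotProduct_mulVec, dotProduct_comm]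

/-- The master algebraic identity behind `memL`. -/
lemma lfun_rep {N m n q : ℕ} (F : Fin (N + 2) → Matrix (Fin m) (Fin n) ℝ)
    (C : Fin (N + 1) → Matrix (Fin m) (Fin n) ℝ)
    (H : Fin (N + 1) → Matrix (Fin q) (Fin n) ℝ)
    (l : Fin (N + 2) → Fin n → ℝ)
    (z : Fin (N + 2) → Fin m → ℝ) (u : Fin (N + 1) → Fin q → ℝ)
    (hk : ∀ k : Fin (N + 1),
      l k.castSucc =
        (F k.castSucc)ᵀ *ᵥ z k.castSucc - (C k)ᵀ *ᵥ z k.succ + (H k)ᵀ *ᵥ u k)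
    (hlast : (F (Fin.last (N + 1)))ᵀ *ᵥ z (Fin.last (N + 1)) = l (Fin.last (N + 1)))
    (x : Fin (N + 2) → Fin n → ℝ) :
    lfun l x = (∑ j, (F j *ᵥ x j) ⬝ᵥ z j)
      - (∑ k : Fin (N + 1), (C k *ᵥ x k.castSucc) ⬝ᵥ z k.succ)
      + ∑ k : Fin (N + 1), (H k *ᵥ x k.castSucc) ⬝ᵥ u k := by
  have hterm : ∀ k : Fin (N + 1), l k.castSucc ⬝ᵥ x k.castSucc =
      (F k.castSucc *ᵥ x k.castSucc) ⬝ᵥ z k.castSucc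
        - (C k *ᵥ x k.castSucc) ⬝ᵥ z k.succ + (H k *ᵥ x k.castSucc) ⬝ᵥ u k := by
    intro k
    rw [hk k, add_dotProduct, sub_dotProduct, tdot, tdot, tdot]
  unfold lfun
  rw [Fin.sum_univ_castSucc (f := fun k => l k ⬝ᵥ x k),
    Fin.sum_univ_castSucc (f := fun j => (F j *ᵥ x j) ⬝ᵥ z j),
    Finset.sum_congr rfl fun k _ => hterm k, ← hlast, tdot,
    Finset.sum_add_distrib, Finset.sum_sub_distrib]
  ring

/-- Under the dynamics constraints the `F`-sum turns into a `B`-sum plus the `C`-sum. -/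
lemma fsum_eq {N m n p : ℕ} (F : Fin (N + 2) → Matrix (Fin m) (Fin n) ℝ)
    (C : Fin (N + 1) → Matrix (Fin m) (Fin n) ℝ)
    (B : Fin (N + 2) → Matrix (Fin m) (Fin p) ℝ)
    (z : Fin (N + 2) → Fin m → ℝ)
    (x : Fin (N + 2) → Fin n → ℝ) (f : Fin (N + 2) → Fin p → ℝ)
    (hxf : (x, f) ∈ NSet F C B) :
    (∑ j, (F j *ᵥ x j) ⬝ᵥ z j) = (∑ j, (B j *ᵥ f j) ⬝ᵥ z j)
      + ∑ k : Fin (N + 1), (C k *ᵥ x k.castSucc) ⬝ᵥ z k.succ := by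
  obtain ⟨hc1, hc2⟩ := hxf
  rw [Fin.sum_univ_succ (f := fun j => (F j *ᵥ x j) ⬝ᵥ z j),
    Fin.sum_univ_succ (f := fun j => (B j *ᵥ f j) ⬝ᵥ z j), hc2]
  have hstep : ∀ k : Fin (N + 1), (F k.succ *ᵥ x k.succ) ⬝ᵥ z k.succ =
      (B k.succ *ᵥ f k.succ) ⬝ᵥ z k.succ + (C k *ᵥ x k.castSucc) ⬝ᵥ z k.succ := by
    intro k
    have h : F k.succ *ᵥ x k.succ = B k.succ *ᵥ f k.succ + C k *ᵥ x k.castSucc := by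
      rw [← hc1 k]; abel
    rw [h, add_dotProduct]
  rw [Finset.sum_congr rfl fun k _ => hstep k, Finset.sum_add_distrib]
  ring

/-- Each single `Q`-term of `J` is at most `1` on the a-posteriori set. -/
lemma qterm_le {N n p q : ℕ} {H : Fin (N + 1) → Matrix (Fin q) (Fin n) ℝ}
    {Q : Fin (N + 2) → Matrix (Fin p) (Fin p) ℝ}
    {R : Fin (N + 1) → Matrix (Fin q) (Fin q) ℝ}
    {y : Fin (N + 1) → Fin q → ℝ}
    (hQ : ∀ j, (Q j).PosDef) (hR : ∀ k, (R k).PosDef)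
    {f : Fin (N + 2) → Fin p → ℝ} {x : Fin (N + 2) → Fin n → ℝ}
    (hJ : Jfun H Q R y f x ≤ 1) :
    (∀ j, (Q j *ᵥ f j) ⬝ᵥ f j ≤ 1) ∧
      ∀ k, (R k *ᵥ (y k - H k *ᵥ x k.castSucc)) ⬝ᵥ (y k - H k *ᵥ x k.castSucc) ≤ 1 := by
  have hqn : ∀ j, 0 ≤ (Q j *ᵥ f j) ⬝ᵥ f j := by
    intro j; rw [dotProduct_comm]; exact (hQ j).posSemidef.dotProduct_mulVec_nonneg (f j)
  have hrn : ∀ k, 0 ≤ (R k *ᵥ (y k - H k *ᵥ x k.castSucc)) ⬝ᵥ (y k - H k *ᵥ x k.castSucc) := by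
    intro k; rw [dotProduct_comm]; exact (hR k).posSemidef.dotProduct_mulVec_nonneg _
  have hq : 0 ≤ ∑ j, (Q j *ᵥ f j) ⬝ᵥ f j := Finset.sum_nonneg fun j _ => hqn j
  have hr : 0 ≤ ∑ k : Fin (N + 1),
      (R k *ᵥ (y k - H k *ᵥ x k.castSucc)) ⬝ᵥ (y k - H k *ᵥ x k.castSucc) :=
    Finset.sum_nonneg fun k _ => hrn k
  unfold Jfun at hJ
  constructor
  · intro j
    have h1 : (Q j *ᵥ f j) ⬝ᵥ f j ≤ ∑ j', (Q j' *ᵥ f j') ⬝ᵥ f j' :=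
      Finset.single_le_sum (fun i _ => hqn i) (Finset.mem_univ j)
    linarith
  · intro k
    have h1 : (R k *ᵥ (y k - H k *ᵥ x k.castSucc)) ⬝ᵥ (y k - H k *ᵥ x k.castSucc) ≤
        ∑ k' : Fin (N + 1),
          (R k' *ᵥ (y k' - H k' *ᵥ x k'.castSucc)) ⬝ᵥ (y k' - H k' *ᵥ x k'.castSucc) :=
      Finset.single_le_sum (fun i _ => hrn i) (Finset.mem_univ k)
    linarith

/-- `memL` implies that `lfun l` is bounded on the a-posteriori set. -/
lemma bounded_of_memL {N m n p q : ℕ}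
    (F : Fin (N + 2) → Matrix (Fin m) (Fin n) ℝ)
    (C : Fin (N + 1) → Matrix (Fin m) (Fin n) ℝ)
    (H : Fin (N + 1) → Matrix (Fin q) (Fin n) ℝ)
    (B : Fin (N + 2) → Matrix (Fin m) (Fin p) ℝ)
    (Q : Fin (N + 2) → Matrix (Fin p) (Fin p) ℝ)
    (R : Fin (N + 1) → Matrix (Fin q) (Fin q) ℝ)
    (y : Fin (N + 1) → Fin q → ℝ)
    (hQ : ∀ j, (Q j).PosDef) (hR : ∀ k, (R k).PosDef)
    (l : Fin (N + 2) → Fin n → ℝ) (hl : memL F C H l) :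
    ∃ M : ℝ, ∀ x ∈ GSet F C H B Q R y, |lfun l x| ≤ M := by
  obtain ⟨z, u, hk, hlast⟩ := hl
  refine ⟨(∑ j, Real.sqrt (((B j)ᵀ *ᵥ z j) ⬝ᵥ ((Q j)⁻¹ *ᵥ ((B j)ᵀ *ᵥ z j))))
    + ((∑ k : Fin (N + 1), |u k ⬝ᵥ y k|)
      + ∑ k : Fin (N + 1), Real.sqrt (u k ⬝ᵥ ((R k)⁻¹ *ᵥ u k))), ?_⟩
  rintro x ⟨f, hxf, hJ⟩
  obtain ⟨hfb, hrb⟩ := qterm_le hQ hR hJ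
  have hid : lfun l x = (∑ j, ((B j)ᵀ *ᵥ z j) ⬝ᵥ f j)
      + ((∑ k : Fin (N + 1), u k ⬝ᵥ y k)
        - ∑ k : Fin (N + 1), u k ⬝ᵥ (y k - H k *ᵥ x k.castSucc)) := by
    rw [lfun_rep F C H l z u hk hlast x, fsum_eq F C B z x f hxf]
    have e1 : ∀ j, (B j *ᵥ f j) ⬝ᵥ z j = ((B j)ᵀ *ᵥ z j) ⬝ᵥ f j := fun j => (tdot _ _ _).symm
    have e2 : ∀ k : Fin (N + 1), (H k *ᵥ x k.castSucc) ⬝ᵥ u k =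
        u k ⬝ᵥ y k - u k ⬝ᵥ (y k - H k *ᵥ x k.castSucc) := by
      intro k
      rw [dotProduct_sub, dotProduct_comm]
      ring
    rw [Finset.sum_congr rfl fun j _ => e1 j, Finset.sum_congr rfl fun k _ => e2 k,
      Finset.sum_sub_distrib]
    ring
  rw [hid]
  have b1 : |∑ j, ((B j)ᵀ *ᵥ z j) ⬝ᵥ f j| ≤
      ∑ j, Real.sqrt (((B j)ᵀ *ᵥ z j) ⬝ᵥ ((Q j)⁻¹ *ᵥ ((B j)ᵀ *ᵥ z j))) := by
    refine le_trans (Finset.abs_sum_le_sum_abs _ _) (Finset.sum_le_sum fun j _ => ?_)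
    exact cs_bound (hQ j) _ _ (hfb j)
  have b2 : |∑ k : Fin (N + 1), u k ⬝ᵥ (y k - H k *ᵥ x k.castSucc)| ≤
      ∑ k : Fin (N + 1), Real.sqrt (u k ⬝ᵥ ((R k)⁻¹ *ᵥ u k)) := by
    refine le_trans (Finset.abs_sum_le_sum_abs _ _) (Finset.sum_le_sum fun k _ => ?_)
    exact cs_bound (hR k) _ _ (hrb k)
  have b3 : |∑ k : Fin (N + 1), u k ⬝ᵥ y k| ≤ ∑ k : Fin (N + 1), |u k ⬝ᵥ y k| :=
    Finset.abs_sum_le_sum_abs _ _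
  calc |∑ j, ((B j)ᵀ *ᵥ z j) ⬝ᵥ f j
      + ((∑ k : Fin (N + 1), u k ⬝ᵥ y k)
        - ∑ k : Fin (N + 1), u k ⬝ᵥ (y k - H k *ᵥ x k.castSucc))|
      ≤ |∑ j, ((B j)ᵀ *ᵥ z j) ⬝ᵥ f j|
        + (|∑ k : Fin (N + 1), u k ⬝ᵥ y k|
          + |∑ k : Fin (N + 1), u k ⬝ᵥ (y k - H k *ᵥ x k.castSucc)|) :=
        le_trans (abs_add_le _ _) (add_le_add le_rfl (abs_sub _ _))
  _ ≤ _ := add_le_add b1 (add_le_add b3 b2)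

lemma lfun_add_smul {N n : ℕ} (l xt v : Fin (N + 2) → Fin n → ℝ) (t : ℝ) :
    lfun l (xt + t • v) = lfun l xt + t * lfun l v := by
  unfold lfun
  rw [Finset.mul_sum, ← Finset.sum_add_distrib]
  refine Finset.sum_congr rfl fun k _ => ?_
  have e : (xt + t • v) k = xt k + t • v k := rfl
  rw [e, dotProduct_add, dotProduct_smul, smul_eq_mul]

lemma lfun_single {N n : ℕ} (l : Fin (N + 2) → Fin n → ℝ) (j : Fin (N + 2)) (v : Fin n → ℝ) :
    lfun l (Pi.single j v) = l j ⬝ᵥ v := by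
  unfold lfun
  rw [Finset.sum_eq_single j]
  · rw [Pi.single_eq_same]
  · intro j' _ hne; rw [Pi.single_eq_of_ne hne, dotProduct_zero]
  · intro h; exact absurd (Finset.mem_univ j) h

lemma mem_G_perturb {N m n p q : ℕ}
    {F : Fin (N + 2) → Matrix (Fin m) (Fin n) ℝ}
    {C : Fin (N + 1) → Matrix (Fin m) (Fin n) ℝ}
    {H : Fin (N + 1) → Matrix (Fin q) (Fin n) ℝ}
    {B : Fin (N + 2) → Matrix (Fin m) (Fin p) ℝ}
    {Q : Fin (N + 2) → Matrix (Fin p) (Fin p) ℝ}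
    {R : Fin (N + 1) → Matrix (Fin q) (Fin q) ℝ}
    {y : Fin (N + 1) → Fin q → ℝ}
    {xt : Fin (N + 2) → Fin n → ℝ} (hxt : xt ∈ GSet F C H B Q R y)
    (v : Fin (N + 2) → Fin n → ℝ) (t : ℝ)
    (h1 : ∀ k : Fin (N + 1), F k.succ *ᵥ v k.succ - C k *ᵥ v k.castSucc = 0)
    (h2 : F 0 *ᵥ v 0 = 0)
    (h3 : ∀ k : Fin (N + 1), H k *ᵥ v k.castSucc = 0) :
    xt + t • v ∈ GSet F C H B Q R y := by
  obtain ⟨f, ⟨hc1, hc2⟩, hJ⟩ := hxt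
  refine ⟨f, ⟨fun k => ?_, ?_⟩, ?_⟩
  · show F k.succ *ᵥ (xt + t • v) k.succ - C k *ᵥ (xt + t • v) k.castSucc
        = B k.succ *ᵥ f k.succ
    have e : (xt + t • v) k.succ = xt k.succ + t • v k.succ := rfl
    have e' : (xt + t • v) k.castSucc = xt k.castSucc + t • v k.castSucc := rfl
    rw [e, e', mulVec_add, mulVec_add, mulVec_smul, mulVec_smul, ← hc1 k]
    show _ = F k.succ *ᵥ xt k.succ - C k *ᵥ xt k.castSucc
    have hv : t • (F k.succ *ᵥ v k.succ) - t • (C k *ᵥ v k.castSucc) = 0 := by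
      rw [← smul_sub, h1 k, smul_zero]
    rw [show F k.succ *ᵥ xt k.succ + t • (F k.succ *ᵥ v k.succ)
        - (C k *ᵥ xt k.castSucc + t • (C k *ᵥ v k.castSucc))
        = (F k.succ *ᵥ xt k.succ - C k *ᵥ xt k.castSucc)
          + (t • (F k.succ *ᵥ v k.succ) - t • (C k *ᵥ v k.castSucc)) from by abel,
      hv, add_zero]
  · show F 0 *ᵥ (xt + t • v) 0 = B 0 *ᵥ f 0
    have e : (xt + t • v) 0 = xt 0 + t • v 0 := rfl
    rw [e, mulVec_add, mulVec_smul, h2, smul_zero, add_zero]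
    exact hc2
  · have hJeq : Jfun H Q R y f (xt + t • v) = Jfun H Q R y f xt := by
      unfold Jfun
      congr 1
      refine Finset.sum_congr rfl fun k _ => ?_
      have e' : (xt + t • v) k.castSucc = xt k.castSucc + t • v k.castSucc := rfl
      rw [e', mulVec_add, mulVec_smul, h3 k, smul_zero, add_zero]
    rw [hJeq]; exact hJ

theorem stmt2 {N m n p q : ℕ}
    (F : Fin (N + 2) → Matrix (Fin m) (Fin n) ℝ)
    (C : Fin (N + 1) → Matrix (Fin m) (Fin n) ℝ)
    (H : Fin (N + 1) → Matrix (Fin q) (Fin n) ℝ)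
    (B : Fin (N + 2) → Matrix (Fin m) (Fin p) ℝ)
    (Q : Fin (N + 2) → Matrix (Fin p) (Fin p) ℝ)
    (R : Fin (N + 1) → Matrix (Fin q) (Fin q) ℝ)
    (y : Fin (N + 1) → Fin q → ℝ)
    (hQ : ∀ j, (Q j).PosDef) (hR : ∀ k, (R k).PosDef)
    (hG : (GSet F C H B Q R y).Nonempty)
    (l : Fin (N + 2) → Fin n → ℝ)
    (xt : Fin (N + 2) → Fin n → ℝ) (hxt : xt ∈ GSet F C H B Q R y) :
    (⨆ x ∈ GSet F C H B Q R y, (↑|lfun l x - lfun l xt| : EReal)) < ⊤ ↔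
      memL F C H l := by
  constructor
  · -- boundedness implies membership in L
    intro hsup
    -- the linear functional x ↦ lfun l x
    let lf : (Fin (N + 2) → Fin n → ℝ) →ₗ[ℝ] ℝ :=
      { toFun := lfun l
        map_add' := fun a b => by
          simp [lfun, Pi.add_apply, dotProduct_add, Finset.sum_add_distrib]
        map_smul' := fun c a => by
          simp [lfun, Pi.smul_apply, dotProduct_smul, Finset.mul_sum, smul_eq_mul] }
    -- the constraint map
    let T0 : (Fin (N + 2) → Fin n → ℝ) →ₗ[ℝ] (Fin m → ℝ) :=
      (F 0).mulVecLin ∘ₗ LinearMap.proj 0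
    let T1 : (Fin (N + 2) → Fin n → ℝ) →ₗ[ℝ] (Fin (N + 1) → Fin m → ℝ) :=
      LinearMap.pi (fun k : Fin (N + 1) =>
        (F k.succ).mulVecLin ∘ₗ LinearMap.proj k.succ
          - (C k).mulVecLin ∘ₗ LinearMap.proj k.castSucc)
    let T2 : (Fin (N + 2) → Fin n → ℝ) →ₗ[ℝ] (Fin (N + 1) → Fin q → ℝ) :=
      LinearMap.pi (fun k : Fin (N + 1) => (H k).mulVecLin ∘ₗ LinearMap.proj k.castSucc)
    let T := T0.prod (T1.prod T2)
    -- the kernel of T is killed by lf, thanks to the finite sup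
    have hker : ∀ x, T x = 0 → lf x = 0 := by
      intro x hx
      have hx0 : F 0 *ᵥ x 0 = 0 := congrArg Prod.fst hx
      have hx12 := congrArg Prod.snd hx
      have hx1 : ∀ k : Fin (N + 1), F k.succ *ᵥ x k.succ - C k *ᵥ x k.castSucc = 0 :=
        fun k => congrFun (congrArg Prod.fst hx12) k
      have hx2 : ∀ k : Fin (N + 1), H k *ᵥ x k.castSucc = 0 :=
        fun k => congrFun (congrArg Prod.snd hx12) k
      by_contra hc
      have hc' : lfun l x ≠ 0 := hc
      have hcpos : 0 < |lfun l x| := abs_pos.mpr hc'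
      set S := ⨆ x' ∈ GSet F C H B Q R y, (↑|lfun l x' - lfun l xt| : EReal) with hS
      have hS0 : (0 : EReal) ≤ S := by
        have h0 : ((|lfun l xt - lfun l xt| : ℝ) : EReal) ≤ S :=
          le_iSup₂ (f := fun x' (_ : x' ∈ GSet F C H B Q R y) =>
            (↑|lfun l x' - lfun l xt| : EReal)) xt hxt
        simpa using h0
      have hSbot : S ≠ ⊥ := ne_bot_of_le_ne_bot (by simp) hS0
      have hStop : S ≠ ⊤ := hsup.ne
      set s := S.toReal with hs
      have hsS : (s : EReal) = S := EReal.coe_toReal hStop hSbot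
      have hs0 : 0 ≤ s := by
        have := EReal.coe_le_coe_iff.mp (by rw [hsS]; simpa using hS0 : ((0:ℝ) : EReal) ≤ (s : EReal))
        linarith
      set t := (s + 1) / |lfun l x| with ht
      have htpos : 0 ≤ t := div_nonneg (by linarith) hcpos.le
      have hmem : xt + t • x ∈ GSet F C H B Q R y := mem_G_perturb hxt x t hx1 hx0 hx2
      have hval : ((|lfun l (xt + t • x) - lfun l xt| : ℝ) : EReal) ≤ S :=
        le_iSup₂ (f := fun x' (_ : x' ∈ GSet F C H B Q R y) =>
          (↑|lfun l x' - lfun l xt| : EReal)) _ hmem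
      have habs : |lfun l (xt + t • x) - lfun l xt| = s + 1 := by
        rw [lfun_add_smul, add_sub_cancel_left, abs_mul, abs_of_nonneg htpos, ht,
          div_mul_cancel₀ _ hcpos.ne']
      rw [habs, ← hsS, EReal.coe_le_coe_iff] at hval
      linarith
    obtain ⟨ψ, hψ⟩ := factor_through T lf hker
    -- extract the dual variables
    set z0 : Fin m → ℝ := fun i => ψ (Pi.single i 1, 0, 0) with hz0
    set zs : Fin (N + 1) → Fin m → ℝ :=
      fun k i => ψ (0, Pi.single k (Pi.single i 1), 0) with hzs
    set uu : Fin (N + 1) → Fin q → ℝ :=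
      fun k i => ψ (0, 0, Pi.single k (Pi.single i 1)) with huu
    have hrep : ∀ (a : Fin m → ℝ) (b : Fin (N + 1) → Fin m → ℝ)
        (c : Fin (N + 1) → Fin q → ℝ),
        ψ (a, b, c) = a ⬝ᵥ z0 + ((∑ k, b k ⬝ᵥ zs k) + ∑ k, c k ⬝ᵥ uu k) := by
      intro a b c
      have hsplit : (a, b, c) = (a, 0, 0) + ((0, b, 0) + ((0:Fin m → ℝ), (0:Fin (N+1) → Fin m → ℝ), c)) := by
        simp [Prod.ext_iff]
      rw [hsplit, map_add, map_add]
      congr 1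
      · exact rep1 (ψ ∘ₗ LinearMap.inl ℝ (Fin m → ℝ) _) a
      congr 1
      · exact rep2 (ψ ∘ₗ LinearMap.inr ℝ (Fin m → ℝ) _ ∘ₗ
          LinearMap.inl ℝ (Fin (N + 1) → Fin m → ℝ) (Fin (N + 1) → Fin q → ℝ)) b
      · exact rep2 (ψ ∘ₗ LinearMap.inr ℝ (Fin m → ℝ) _ ∘ₗ
          LinearMap.inr ℝ (Fin (N + 1) → Fin m → ℝ) (Fin (N + 1) → Fin q → ℝ)) c
    set z : Fin (N + 2) → Fin m → ℝ := Fin.cases z0 zs with hz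
    have hz0' : z 0 = z0 := rfl
    have hzsucc : ∀ k : Fin (N + 1), z k.succ = zs k := fun k => by
      simp [hz]
    -- the key identity
    have key : ∀ x : Fin (N + 2) → Fin n → ℝ,
        (∑ j, (F j *ᵥ x j) ⬝ᵥ z j)
          - (∑ k : Fin (N + 1), (C k *ᵥ x k.castSucc) ⬝ᵥ z k.succ)
          + (∑ k : Fin (N + 1), (H k *ᵥ x k.castSucc) ⬝ᵥ uu k) = lfun l x := by
      intro x
      have h := hψ x
      have hTx : T x = (F 0 *ᵥ x 0, fun k : Fin (N + 1) =>
          F k.succ *ᵥ x k.succ - C k *ᵥ x k.castSucc,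
          fun k : Fin (N + 1) => H k *ᵥ x k.castSucc) := rfl
      rw [hTx, hrep] at h
      have hsplit2 : ∀ k : Fin (N + 1),
          (F k.succ *ᵥ x k.succ - C k *ᵥ x k.castSucc) ⬝ᵥ zs k
          = (F k.succ *ᵥ x k.succ) ⬝ᵥ z k.succ - (C k *ᵥ x k.castSucc) ⬝ᵥ z k.succ := by
        intro k; rw [sub_dotProduct, hzsucc]
      rw [Finset.sum_congr rfl fun k _ => hsplit2 k, Finset.sum_sub_distrib] at h
      rw [Fin.sum_univ_succ (f := fun j => (F j *ᵥ x j) ⬝ᵥ z j), hz0']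
      have hlf : lf x = lfun l x := rfl
      rw [hlf] at h
      rw [← h]
      ring
    refine ⟨z, uu, fun k₀ => ?_, ?_⟩
    · -- equations for k = 0,…,N
      symm
      apply dot_ext
      intro v
      have h := key (Pi.single k₀.castSucc v)
      rw [lfun_single] at h
      have s1 : (∑ j, (F j *ᵥ (Pi.single k₀.castSucc v : Fin (N + 2) → Fin n → ℝ) j) ⬝ᵥ z j)
          = (F k₀.castSucc *ᵥ v) ⬝ᵥ z k₀.castSucc := by
        rw [Finset.sum_eq_single k₀.castSucc]
        · rw [Pi.single_eq_same]
        · intro j' _ hne; rw [Pi.single_eq_of_ne hne, mulVec_zero, zero_dotProduct]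
        · intro hh; exact absurd (Finset.mem_univ _) hh
      have s2 : (∑ k : Fin (N + 1), (C k *ᵥ (Pi.single k₀.castSucc v : Fin (N + 2) → Fin n → ℝ) k.castSucc) ⬝ᵥ z k.succ)
          = (C k₀ *ᵥ v) ⬝ᵥ z k₀.succ := by
        rw [Finset.sum_eq_single k₀]
        · rw [Pi.single_eq_same]
        · intro k _ hne
          rw [Pi.single_eq_of_ne (fun hcc => hne (Fin.castSucc_injective _ hcc)),
            mulVec_zero, zero_dotProduct]
        · intro hh; exact absurd (Finset.mem_univ _) hh
      have s3 : (∑ k : Fin (N + 1), (H k *ᵥ (Pi.single k₀.castSucc v : Fin (N + 2) → Fin n → ℝ) k.castSucc) ⬝ᵥ uu k)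
          = (H k₀ *ᵥ v) ⬝ᵥ uu k₀ := by
        rw [Finset.sum_eq_single k₀]
        · rw [Pi.single_eq_same]
        · intro k _ hne
          rw [Pi.single_eq_of_ne (fun hcc => hne (Fin.castSucc_injective _ hcc)),
            mulVec_zero, zero_dotProduct]
        · intro hh; exact absurd (Finset.mem_univ _) hh
      rw [s1, s2, s3] at h
      rw [add_dotProduct, sub_dotProduct, tdot, tdot, tdot]
      exact h
    · -- terminal equation
      apply dot_ext
      intro v
      have h := key (Pi.single (Fin.last (N + 1)) v)
      rw [lfun_single] at h
      have hlastne : ∀ k : Fin (N + 1), k.castSucc ≠ Fin.last (N + 1) :=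
        fun k => (Fin.castSucc_lt_last k).ne
      have s1 : (∑ j, (F j *ᵥ (Pi.single (Fin.last (N + 1)) v : Fin (N + 2) → Fin n → ℝ) j) ⬝ᵥ z j)
          = (F (Fin.last (N + 1)) *ᵥ v) ⬝ᵥ z (Fin.last (N + 1)) := by
        rw [Finset.sum_eq_single (Fin.last (N + 1))]
        · rw [Pi.single_eq_same]
        · intro j' _ hne; rw [Pi.single_eq_of_ne hne, mulVec_zero, zero_dotProduct]
        · intro hh; exact absurd (Finset.mem_univ _) hh
      have s2 : (∑ k : Fin (N + 1),
          (C k *ᵥ (Pi.single (Fin.last (N + 1)) v : Fin (N + 2) → Fin n → ℝ) k.castSucc) ⬝ᵥ z k.succ) = 0 := by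
        refine Finset.sum_eq_zero fun k _ => ?_
        rw [Pi.single_eq_of_ne (hlastne k), mulVec_zero, zero_dotProduct]
      have s3 : (∑ k : Fin (N + 1),
          (H k *ᵥ (Pi.single (Fin.last (N + 1)) v : Fin (N + 2) → Fin n → ℝ) k.castSucc) ⬝ᵥ uu k) = 0 := by
        refine Finset.sum_eq_zero fun k _ => ?_
        rw [Pi.single_eq_of_ne (hlastne k), mulVec_zero, zero_dotProduct]
      rw [s1, s2, s3, sub_zero, add_zero] at h
      rw [tdot]
      exact h
  · -- membership in L implies boundedness
    intro hl
    obtain ⟨M, hM⟩ := bounded_of_memL F C H B Q R y hQ hR l hl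
    refine lt_of_le_of_lt (iSup₂_le fun x hx => ?_) (EReal.coe_lt_top (2 * M))
    have h1 := hM x hx
    have h2 := hM xt hxt
    have : |lfun l x - lfun l xt| ≤ 2 * M :=
      le_trans (abs_sub _ _) (by linarith)
    exact_mod_cast EReal.coe_le_coe_iff.mpr this
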